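/- For every copyless CRA A whose register set X carries a linear order ⪯, there exists a copyless CRA A' in normal form with respect to ⪯, with the same register set X, such that A and A' compute the same function; moreover the number of states of A' can be bounded by |Q| times the number of permutations of X (i.e., exponentially in the size of A). -/

import Mathlib

/-! ### Expressions over a semiring with variables -/

/-- Syntax trees of expressions over a semiring `S` with variables in `X`,
built from constants, variables, and the two semiring operations. -/
inductive Expr (S X : Type) : Type where
  | const : S → Expr S X
  | var : X → Expr S X
  | add : Expr S X → Expr S X → Expr S X
  | mul : Expr S X → Expr S X → Expr S X

namespace Expr

variable {S X Y : Type}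

/-- Evaluation of an expression under a valuation `ν : X → S`. -/
def eval [Add S] [Mul S] (ν : X → S) : Expr S X → S
  | const c => c
  | var x => ν x
  | add e₁ e₂ => e₁.eval ν + e₂.eval ν
  | mul e₁ e₂ => e₁.eval ν * e₂.eval ν

/-- Number of occurrences of the variable `x` in an expression. -/
def varCount [DecidableEq X] (x : X) : Expr S X → ℕ
  | const _ => 0
  | var y => if y = x then 1 else 0
  | add e₁ e₂ => e₁.varCount x + e₂.varCount x
  | mul e₁ e₂ => e₁.varCount x + e₂.varCount x

/-- The set `Var(e)` of variables occurring in an expression. -/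
def vars [DecidableEq X] : Expr S X → Finset X
  | const _ => ∅
  | var x => {x}
  | add e₁ e₂ => e₁.vars ∪ e₂.vars
  | mul e₁ e₂ => e₁.vars ∪ e₂.vars

/-- An expression is copyless if every variable occurs at most once in it. -/
def Copyless [DecidableEq X] (e : Expr S X) : Prop :=
  ∀ x : X, e.varCount x ≤ 1

/-- Substituting an expression `σ x` for each variable `x`. -/
def subst (σ : X → Expr S Y) : Expr S X → Expr S Y
  | const c => const c
  | var x => σ x
  | add e₁ e₂ => add (e₁.subst σ) (e₂.subst σ)
  | mul e₁ e₂ => mul (e₁.subst σ) (e₂.subst σ)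

/-- An expression never mentions the constant `0`. -/
def ZeroFree [Zero S] : Expr S X → Prop
  | const c => c ≠ (0 : S)
  | var _ => True
  | add e₁ e₂ => e₁.ZeroFree ∧ e₂.ZeroFree
  | mul e₁ e₂ => e₁.ZeroFree ∧ e₂.ZeroFree

/-- Number of constants mentioned in an expression. -/
def constCount : Expr S X → ℕ
  | const _ => 1
  | var _ => 0
  | add e₁ e₂ => e₁.constCount + e₂.constCount
  | mul e₁ e₂ => e₁.constCount + e₂.constCount

/-- The top node of the expression is a `⊕`-node. -/
def isAddNode : Expr S X → Bool
  | add _ _ => true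
  | _ => false

/-- The top node of the expression is a `⊙`-node. -/
def isMulNode : Expr S X → Bool
  | mul _ _ => true
  | _ => false

/-- The alternation `Alt(e)` of an expression: the maximal number of shifts
between `⊕` and `⊙` along branches of the parse tree. -/
def alt : Expr S X → ℕ
  | const _ => 0
  | var _ => 0
  | add e₁ e₂ =>
      max (e₁.alt + (if e₁.isMulNode then 1 else 0))
          (e₂.alt + (if e₂.isMulNode then 1 else 0)) + 1
  | mul e₁ e₂ =>
      max (e₁.alt + (if e₁.isAddNode then 1 else 0))
          (e₂.alt + (if e₂.isAddNode then 1 else 0)) + 1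

end Expr

/-! ### Substitutions -/

namespace Subs

variable {S X : Type}

/-- A substitution is copyless if each `σ x` is a copyless expression and
distinct registers use disjoint sets of variables. -/
def Copyless [DecidableEq X] (σ : X → Expr S X) : Prop :=
  (∀ x : X, (σ x).Copyless) ∧
    ∀ x y : X, x ≠ y → Disjoint ((σ x).vars) ((σ y).vars)

/-- Composition `σ ∘ τ` of substitutions: `(σ ∘ τ)(x) = σ̂(τ(x))`. -/
def comp (σ τ : X → Expr S X) : X → Expr S X :=
  fun x => (τ x).subst σ

/-- The identity substitution. -/
def idS : X → Expr S X := fun x => Expr.var x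

/-- `σ^n`, the `n`-fold composition of `σ` with itself. -/
def iterate (σ : X → Expr S X) : ℕ → (X → Expr S X)
  | 0 => idS
  | n + 1 => comp σ (iterate σ n)

/-- A substitution is in normal form w.r.t. the order on `X` if every variable
mentioned in `σ x` is at least `x`. -/
def NormalForm [DecidableEq X] [LE X] (σ : X → Expr S X) : Prop :=
  ∀ x y : X, y ∈ (σ x).vars → x ≤ y

/-- The register `x` is `σ`-stable, i.e. `x ∈ Var(σ x)`. -/
def Stable [DecidableEq X] (σ : X → Expr S X) (x : X) : Prop :=
  x ∈ (σ x).vars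

/-- A substitution is collapsing if every non-`σ`-stable register is mapped
to a variable-free (ground) expression. -/
def Collapsing [DecidableEq X] (σ : X → Expr S X) : Prop :=
  ∀ y : X, ¬ Stable σ y → (σ y).vars = ∅

end Subs

/-! ### Cost register automata -/

/-- A cost register automaton over semiring `S`, alphabet `A` and registers `X`. -/
structure CRA (S A X : Type) where
  Q : Type
  [finQ : Fintype Q]
  δ : Q → A → Q × (X → Expr S X)
  q0 : Q
  ν0 : X → S
  μ : Q → Expr S X

attribute [instance] CRA.finQ

namespace CRA

variable {S A X : Type}

/-- One step of the run of a CRA on a letter. -/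
def step [Add S] [Mul S] (M : CRA S A X) (c : M.Q × (X → S)) (a : A) : M.Q × (X → S) :=
  ((M.δ c.1 a).1, fun x => ((M.δ c.1 a).2 x).eval c.2)

/-- The configuration reached by the (unique) run of a CRA on a word. -/
def run [Add S] [Mul S] (M : CRA S A X) (w : List A) : M.Q × (X → S) :=
  w.foldl M.step (M.q0, M.ν0)

/-- The output `⟦M⟧(w)` of the CRA on the word `w`. -/
def output [Add S] [Mul S] (M : CRA S A X) (w : List A) : S :=
  (M.μ (M.run w).1).eval (M.run w).2

/-- A CRA is copyless if all its transition substitutions and all its output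
expressions are copyless. -/
def CopylessCRA [DecidableEq X] (M : CRA S A X) : Prop :=
  (∀ (q : M.Q) (a : A), Subs.Copyless (M.δ q a).2) ∧
    ∀ q : M.Q, (M.μ q).Copyless

/-- The transitive closure `δ*` of the transition function, composing the
substitutions along the word. -/
def deltaStar (M : CRA S A X) (q : M.Q) : List A → M.Q × (X → Expr S X)
  | [] => (q, Subs.idS)
  | a :: w =>
      ((M.deltaStar (M.δ q a).1 w).1,
        Subs.comp (M.δ q a).2 ((M.deltaStar (M.δ q a).1 w).2))

/-- A CRA is in normal form if all its transition substitutions are. -/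
def NormalFormCRA [DecidableEq X] [LE X] (M : CRA S A X) : Prop :=
  ∀ (q : M.Q) (a : A), Subs.NormalForm (M.δ q a).2

/-- A register is stable in `M` if it is stable on every substitution occurring
in `δ*`. -/
def StableIn [DecidableEq X] (M : CRA S A X) (x : X) : Prop :=
  ∀ (q : M.Q) (w : List A), Subs.Stable (M.deltaStar q w).2 x

/-- Every state of `M` is reachable from every state. -/
def StronglyConnected (M : CRA S A X) : Prop :=
  ∀ q q' : M.Q, ∃ w : List A, (M.deltaStar q w).1 = q'

/-- The ground expression `ν0 ∘ σ1 ∘ … ∘ σn ∘ μ(qn)` arising from the run on `w`. -/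
def groundExpr (M : CRA S A X) (w : List A) : Expr S X :=
  ((M.μ (M.deltaStar M.q0 w).1).subst ((M.deltaStar M.q0 w).2)).subst
    (fun x => Expr.const (M.ν0 x))

/-- The CRA has bounded alternation: the alternation of all ground output
expressions is uniformly bounded. -/
def BoundedAlt (M : CRA S A X) : Prop :=
  ∃ N : ℕ, ∀ w : List A, (M.groundExpr w).alt ≤ N

end CRA


namespace NFAux
open Expr

variable {S X : Type}

lemma eval_subst [Add S] [Mul S] (σ : X → Expr S X) (ν : X → S) (e : Expr S X) :
    (e.subst σ).eval ν = e.eval (fun x => (σ x).eval ν) := by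
  induction e <;> simp [Expr.subst, Expr.eval, *]

/-- Renaming of variables. -/
def ren (f : X → X) (e : Expr S X) : Expr S X := e.subst (fun x => Expr.var (f x))

lemma eval_ren [Add S] [Mul S] (f : X → X) (ν : X → S) (e : Expr S X) :
    (ren f e).eval ν = e.eval (fun x => ν (f x)) := by
  simpa [Expr.eval, ren] using eval_subst (fun x => (Expr.var (f x) : Expr S X)) ν e

lemma vars_ren [DecidableEq X] (f : X → X) (e : Expr S X) :
    (ren f e).vars = e.vars.image f := by
  induction e with
  | const c => simp [ren, Expr.subst, Expr.vars]
  | var y => simp [ren, Expr.subst, Expr.vars]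
  | add e₁ e₂ ih₁ ih₂ =>
      simp only [ren] at ih₁ ih₂
      simp [ren, Expr.subst, Expr.vars, Finset.image_union, ih₁, ih₂]
  | mul e₁ e₂ ih₁ ih₂ =>
      simp only [ren] at ih₁ ih₂
      simp [ren, Expr.subst, Expr.vars, Finset.image_union, ih₁, ih₂]

lemma varCount_ren [DecidableEq X] {f : X → X} (hf : Function.Injective f)
    (e : Expr S X) (x : X) : (ren f e).varCount (f x) = e.varCount x := by
  induction e with
  | const c => rfl
  | var y => simp [ren, Expr.subst, Expr.varCount, hf.eq_iff]
  | add e₁ e₂ ih₁ ih₂ => simp [ren, Expr.subst, Expr.varCount] at *; omega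
  | mul e₁ e₂ ih₁ ih₂ => simp [ren, Expr.subst, Expr.varCount] at *; omega

lemma exists_perm_eqOn [DecidableEq X] (T : Finset X) (g : X → X)
    (hg : Set.InjOn g ↑T) : ∃ τ : Equiv.Perm X, ∀ z ∈ T, τ z = g z := by
  classical
  induction T using Finset.induction_on with
  | empty => exact ⟨1, by simp⟩
  | @insert a T ha ih =>
      obtain ⟨τ, hτ⟩ := ih (hg.mono (by exact_mod_cast Finset.subset_insert a T))
      refine ⟨(Equiv.swap a (τ.symm (g a))).trans τ, ?_⟩
      intro z hz
      rcases Finset.mem_insert.1 hz with rfl | hzT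
      · simp [Equiv.swap_apply_left]
      · have hza : z ≠ a := by rintro rfl; exact ha hzT
        have hzb : z ≠ τ.symm (g a) := by
          rintro h
          have : τ z = g a := by rw [h]; simp
          have : g z = g a := by rw [← hτ z hzT, this]
          exact hza (hg (by simp [hzT]) (by simp) this)
        simp [Equiv.trans_apply, Equiv.swap_apply_of_ne_of_ne hza hzb, hτ z hzT]

lemma exists_perm_le [DecidableEq X] [Fintype X] [LinearOrder X] (V : X → Finset X)
    (hd : ∀ x y, x ≠ y → Disjoint (V x) (V y)) :
    ∃ ρ : Equiv.Perm X, ∀ x y, y ∈ V (ρ x) → x ≤ y := by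
  classical
  rcases isEmpty_or_nonempty X with hX | hX
  · exact ⟨1, fun x => (hX.false x).elim⟩
  set n := Fintype.card X with hn
  have hn0 : 0 < n := Fintype.card_pos
  set ι := monoEquivOfFin X (rfl : Fintype.card X = n) with hι
  set T : Finset X := Finset.univ.filter (fun z => (V z).Nonempty) with hT
  have hmemT : ∀ z, z ∈ T ↔ (V z).Nonempty := by
    intro z; simp [hT]
  set f : X → X := fun z => if h : (V z).Nonempty then (V z).min' h else z with hf
  have hfmem : ∀ z ∈ T, f z ∈ V z := by
    intro z hz
    have h := (hmemT z).1 hz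
    simp only [hf, dif_pos h]
    exact Finset.min'_mem _ _
  have hfmin : ∀ z (hz : z ∈ T), ∀ y ∈ V z, f z ≤ y := by
    intro z hz y hy
    have h := (hmemT z).1 hz
    simp only [hf, dif_pos h]
    exact Finset.min'_le _ _ hy
  have hfinj : Set.InjOn f ↑T := by
    intro z hz z' hz' hzz'
    by_contra hne
    have h1 : f z ∈ V z := hfmem z (by exact_mod_cast hz)
    have h2 : f z ∈ V z' := hzz' ▸ hfmem z' (by exact_mod_cast hz')
    exact (Finset.disjoint_left.1 (hd z z' hne)) h1 h2
  set c : X → ℕ := fun z => (T.filter (fun z' => f z' < f z)).card with hc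
  have hclt : ∀ z ∈ T, c z ≤ ((ι.symm (f z) : Fin n) : ℕ) := by
    intro z hz
    have : (T.filter (fun z' => f z' < f z)).card ≤
        (Finset.range ((ι.symm (f z) : Fin n) : ℕ)).card := by
      apply Finset.card_le_card_of_injOn (fun z' => ((ι.symm (f z') : Fin n) : ℕ))
      · intro z' hz'
        have h1 : f z' < f z := (Finset.mem_filter.1 hz').2
        have : ι.symm (f z') < ι.symm (f z) := by
          simpa using ι.symm.strictMono h1
        simpa [Finset.mem_range] using this
      · intro a ha b hb hab
        have : f a = f b := by
          have := Fin.val_injective hab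
          have := ι.symm.injective this
          exact this
        exact hfinj (by exact_mod_cast (Finset.filter_subset _ _ ha))
          (by exact_mod_cast (Finset.filter_subset _ _ hb)) this
    simpa [Finset.card_range] using this
  have hckey : ∀ u ∈ T, ∀ v ∈ T, f u < f v → c u < c v := by
    intro u hu v hv huv
    apply Finset.card_lt_card
    constructor
    · intro w hw
      have := Finset.mem_filter.1 hw
      exact Finset.mem_filter.2 ⟨this.1, lt_trans this.2 huv⟩
    · intro hsub
      have : u ∈ T.filter (fun z' => f z' < f u) :=
        hsub (Finset.mem_filter.2 ⟨hu, huv⟩)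
      exact absurd (Finset.mem_filter.1 this).2 (lt_irrefl _)
  set g : X → X := fun z => ι ⟨c z % n, Nat.mod_lt _ hn0⟩ with hg
  have hgle : ∀ z ∈ T, g z ≤ f z := by
    intro z hz
    have h1 : c z % n = c z := Nat.mod_eq_of_lt (lt_of_le_of_lt (hclt z hz) (ι.symm (f z)).isLt)
    have h2 : (⟨c z % n, Nat.mod_lt _ hn0⟩ : Fin n) ≤ ι.symm (f z) := by
      rw [Fin.le_def]
      simpa [h1] using hclt z hz
    calc g z = ι ⟨c z % n, Nat.mod_lt _ hn0⟩ := rfl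
      _ ≤ ι (ι.symm (f z)) := ι.monotone h2
      _ = f z := by simp
  have hginj : Set.InjOn g ↑T := by
    intro z hz z' hz' hzz'
    have hzT : z ∈ T := by exact_mod_cast hz
    have hz'T : z' ∈ T := by exact_mod_cast hz'
    have h1 : c z % n = c z := Nat.mod_eq_of_lt (lt_of_le_of_lt (hclt z hzT) (ι.symm (f z)).isLt)
    have h2 : c z' % n = c z' := Nat.mod_eq_of_lt (lt_of_le_of_lt (hclt z' hz'T) (ι.symm (f z')).isLt)
    have hcc : c z = c z' := by
      have := ι.injective hzz'
      have := Fin.mk.injEq .. ▸ this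
      rw [← h1, ← h2]
      exact congrArg Fin.val (ι.injective hzz')
    by_contra hne
    rcases lt_trichotomy (f z) (f z') with h | h | h
    · exact absurd hcc (Nat.ne_of_lt (hckey z hzT z' hz'T h))
    · exact hne (hfinj hz hz' h)
    · exact absurd hcc.symm (Nat.ne_of_lt (hckey z' hz'T z hzT h))
  obtain ⟨τ, hτ⟩ := exists_perm_eqOn T g hginj
  refine ⟨τ.symm, ?_⟩
  intro x y hy
  have hmem : τ.symm x ∈ T := (hmemT _).2 ⟨y, hy⟩
  have hx : x = g (τ.symm x) := by
    conv_lhs => rw [← τ.apply_symm_apply x]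
    exact hτ _ hmem
  calc x = g (τ.symm x) := hx
    _ ≤ f (τ.symm x) := hgle _ hmem
    _ ≤ y := hfmin _ hmem y hy

end NFAux
/-! ### STATEMENT 2
Every copyless CRA admits an equivalent copyless CRA in normal form with the
same register set, whose number of states is bounded by the number of states
of the original automaton times the number of permutations of the registers. -/
theorem copyless_CRA_normal_form {S A X : Type} [CommSemiring S] [DecidableEq X]
    [Fintype X] [LinearOrder X] (M : CRA S A X) (hc : M.CopylessCRA) :
    ∃ M' : CRA S A X, M'.CopylessCRA ∧ M'.NormalFormCRA ∧
      (∀ w : List A, M'.output w = M.output w) ∧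
      Fintype.card M'.Q ≤ Fintype.card M.Q * Fintype.card (Equiv.Perm X) := by
  classical
  obtain ⟨hδ, hμ⟩ := hc
  -- disjointness of renamed variable sets
  have hdisj : ∀ (q : M.Q) (a : A) (π : Equiv.Perm X),
      ∀ x y, x ≠ y → Disjoint ((((M.δ q a).2 x).vars).image ⇑π.symm)
        ((((M.δ q a).2 y).vars).image ⇑π.symm) := by
    intro q a π x y hxy
    exact (Finset.disjoint_image π.symm.injective).2 ((hδ q a).2 x y hxy)
  -- choose the reordering permutation at each transition
  let nf : M.Q → Equiv.Perm X → A → Equiv.Perm X := fun q π a =>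
    (NFAux.exists_perm_le (fun z => (((M.δ q a).2 z).vars).image ⇑π.symm)
      (hdisj q a π)).choose
  have hnf : ∀ (q : M.Q) (π : Equiv.Perm X) (a : A) (x y : X),
      y ∈ (((M.δ q a).2 (nf q π a x)).vars).image ⇑π.symm → x ≤ y := fun q π a =>
    (NFAux.exists_perm_le (fun z => (((M.δ q a).2 z).vars).image ⇑π.symm)
      (hdisj q a π)).choose_spec
  -- the new automaton
  refine ⟨{
    Q := M.Q × Equiv.Perm X
    finQ := inferInstance
    δ := fun s a =>
      (((M.δ s.1 a).1, nf s.1 s.2 a),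
        fun x => NFAux.ren ⇑s.2.symm ((M.δ s.1 a).2 (nf s.1 s.2 a x)))
    q0 := (M.q0, 1)
    ν0 := M.ν0
    μ := fun s => NFAux.ren ⇑s.2.symm (M.μ s.1) }, ?_, ?_, ?_, ?_⟩
  · -- copyless
    constructor
    · rintro ⟨q, π⟩ a
      constructor
      · intro x v
        have h := NFAux.varCount_ren (f := ⇑π.symm) π.symm.injective
          ((M.δ q a).2 (nf q π a x)) (π v)
        simp only [Equiv.symm_apply_apply] at h
        rw [h]
        exact (hδ q a).1 (nf q π a x) (π v)
      · intro x y hxy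
        rw [NFAux.vars_ren, NFAux.vars_ren]
        exact hdisj q a π _ _ (fun h => hxy ((nf q π a).injective h))
    · rintro ⟨q, π⟩
      intro v
      have h := NFAux.varCount_ren (f := ⇑π.symm) π.symm.injective (M.μ q) (π v)
      simp only [Equiv.symm_apply_apply] at h
      rw [h]
      exact hμ q (π v)
  · -- normal form
    rintro ⟨q, π⟩ a x y hy
    rw [NFAux.vars_ren] at hy
    exact hnf q π a x y hy
  · -- same outputs
    intro w
    set M' : CRA S A X := {
      Q := M.Q × Equiv.Perm X
      finQ := inferInstance
      δ := fun s a =>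
        (((M.δ s.1 a).1, nf s.1 s.2 a),
          fun x => NFAux.ren ⇑s.2.symm ((M.δ s.1 a).2 (nf s.1 s.2 a x)))
      q0 := (M.q0, 1)
      ν0 := M.ν0
      μ := fun s => NFAux.ren ⇑s.2.symm (M.μ s.1) } with hM'
    show M'.output w = M.output w
    have sim : ∀ (w : List A) (q : M.Q) (π : Equiv.Perm X) (ν : X → S),
        ∃ π' : Equiv.Perm X,
          List.foldl M'.step ((q, π), fun x => ν (π x)) w =
            (((List.foldl M.step (q, ν) w).1, π'),
              fun x => (List.foldl M.step (q, ν) w).2 (π' x)) := by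
      intro w
      induction w with
      | nil => intro q π ν; exact ⟨π, rfl⟩
      | cons a w ih =>
          intro q π ν
          have hstep : M'.step ((q, π), fun x => ν (π x)) a =
              (((M.δ q a).1, nf q π a),
                fun x => (M.step (q, ν) a).2 (nf q π a x)) := by
            simp only [CRA.step, hM']
            refine Prod.ext rfl ?_
            funext x
            show Expr.eval (fun x => ν (π x)) (NFAux.ren ⇑π.symm ((M.δ q a).2 (nf q π a x))) = _
            simp [NFAux.eval_ren]
          obtain ⟨π', hπ'⟩ := ih (M.δ q a).1 (nf q π a) (M.step (q, ν) a).2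
          refine ⟨π', ?_⟩
          simp only [List.foldl_cons, hstep]
          have : M.step (q, ν) a = ((M.δ q a).1, (M.step (q, ν) a).2) := rfl
          rw [this] at hπ'
          exact hπ'
    obtain ⟨π', hπ'⟩ := sim w M.q0 1 M.ν0
    have hrun : M'.run w = (((M.run w).1, π'), fun x => (M.run w).2 (π' x)) := by
      have : M'.run w = List.foldl M'.step ((M.q0, (1 : Equiv.Perm X)),
          fun x => M.ν0 ((1 : Equiv.Perm X) x)) w := rfl
      rw [this, hπ']
      rfl
    simp only [CRA.output, hrun]
    show (NFAux.ren ⇑π'.symm (M.μ (M.run w).1)).eval (fun x => (M.run w).2 (π' x)) = _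
    rw [NFAux.eval_ren]
    simp
  · -- number of states
    exact le_of_eq (Fintype.card_prod _ _)
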